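/- Let (X, d) be a metric space with Borel measure μ, z ∈ X, n ≥ 1 an integer, and V, Λ > 0 constants such that μ(B(z, ρ)) ≤ V ρⁿ e^{Λρ} for all ρ > 0. Then for every a ≥ 8, k ∈ {0, 1, 2}, and r ∈ (0, 1], one has ∫_X exp(−a d(z,x)²/r²) · exp(d(z,x)²) · d(z,x)^k dμ(x) ≤ C' r^{n+k}, where C' depends only on n, k, a, V, Λ. -/

import Mathlib

open MeasureTheory
open scoped ENNReal

lemma aux_lintegral_restrict_zero {X : Type*} [MeasurableSpace X] (μ : Measure X)
    (s : Set X) (g : X → ℝ≥0∞) (hg : ∀ x ∈ s, g x = 0) :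
    ∫⁻ x, g x ∂(μ.restrict s) = 0 := by
  refine le_antisymm ?_ zero_le
  rw [MeasureTheory.lintegral_def]
  refine iSup₂_le fun φ hφ => ?_
  have h : φ.lintegral (μ.restrict s) = 0 := by
    unfold SimpleFunc.lintegral
    refine Finset.sum_eq_zero fun y _ => ?_
    rcases eq_or_ne y 0 with h0 | h0
    · simp [h0]
    · have hempty : φ ⁻¹' {y} ∩ s = ∅ := by
        ext x
        simp only [Set.mem_inter_iff, Set.mem_preimage, Set.mem_singleton_iff,
          Set.mem_empty_iff_false, iff_false, not_and]
        intro hxy hxs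
        exact h0 (by rw [← hxy]; exact le_antisymm ((hφ x).trans_eq (hg x hxs)) zero_le)
      rw [Measure.restrict_apply (φ.measurableSet_fiber y), hempty, measure_empty, mul_zero]
  exact h.le

lemma aux_lintegral_restrict_le {X : Type*} [MeasurableSpace X] (μ : Measure X)
    (s : Set X) (g : X → ℝ≥0∞) (c : ℝ≥0∞) (hg : ∀ x ∈ s, g x ≤ c) :
    ∫⁻ x, g x ∂(μ.restrict s) ≤ c * μ s := by
  have h0 : ∫⁻ x, sᶜ.indicator g x ∂(μ.restrict s) = 0 :=
    aux_lintegral_restrict_zero μ s _ (fun x hx =>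
      Set.indicator_of_notMem (by simpa using hx) g)
  calc ∫⁻ x, g x ∂(μ.restrict s)
      ≤ ∫⁻ x, (c + sᶜ.indicator g x) ∂(μ.restrict s) := by
        refine lintegral_mono fun x => ?_
        by_cases hx : x ∈ s
        · simpa [Set.indicator_of_notMem (show x ∉ sᶜ by simpa using hx)] using hg x hx
        · rw [Set.indicator_of_mem (show x ∈ sᶜ by simpa using hx)]
          exact le_add_self
    _ = c * μ s := by
        rw [lintegral_add_left measurable_const, h0, add_zero, lintegral_const,
          Measure.restrict_apply_univ]

lemma aux_scalar (a Λ P M jj L : ℝ) (ha : 8 ≤ a) (hP : jj + 1 ≤ P) (hP1 : 1 ≤ P)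
    (hM : 0 ≤ M) (hjj : 0 ≤ jj) (hL0 : 0 ≤ L) (hL1 : L ≤ 1) :
    (jj + 1) * M * L + -(a / 2 * P ^ 2) + Λ * (P * 2) ≤ Λ ^ 2 / 2 + (M + 1) ^ 2 + jj * (-1) := by
  have e1 : (jj + 1) * M * L ≤ P * M := by
    nlinarith [mul_nonneg (mul_nonneg (show (0:ℝ) ≤ jj + 1 by linarith) hM) (show (0:ℝ) ≤ 1 - L by linarith),
      mul_nonneg (show (0:ℝ) ≤ P - (jj + 1) by linarith) hM]
  nlinarith [sq_nonneg (P - Λ / 2), sq_nonneg (2 * P - (M + 1)),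
    mul_nonneg (show (0:ℝ) ≤ a - 8 by linarith) (sq_nonneg P)]

set_option maxHeartbeats 1000000 in

/-- Weighted Gaussian integral estimate: if `μ(B(z,ρ)) ≤ V ρⁿ e^{Λρ}` for all `ρ > 0`,
then for every `a ≥ 8`, `k ∈ {0,1,2}` and `r ∈ (0,1]`,
`∫ exp(-a d(z,x)²/r²) e^{d(z,x)²} d(z,x)^k dμ(x) ≤ C' r^{n+k}`,
where `C'` depends only on `n, k, a, V, Λ`. -/
theorem stmt12 (n : ℕ) (hn : 1 ≤ n) (k : ℕ) (hk : k ≤ 2) (a V Λ : ℝ)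
    (ha : 8 ≤ a) (hV : 0 < V) (hΛ : 0 < Λ) :
    ∃ C' : ℝ, 0 < C' ∧
      ∀ (X : Type) [MetricSpace X] [MeasurableSpace X] (μ : Measure X) (z : X)
        (r : ℝ), 0 < r → r ≤ 1 →
        (∀ ρ : ℝ, 0 < ρ →
          μ (Metric.ball z ρ) ≤ ENNReal.ofReal (V * ρ ^ n * Real.exp (Λ * ρ))) →
        ∫⁻ x, ENNReal.ofReal
            (Real.exp (-(a * dist z x ^ 2 / r ^ 2)) * Real.exp (dist z x ^ 2) *
              dist z x ^ k) ∂μ ≤ ENNReal.ofReal (C' * r ^ (n + k)) := by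
  classical
  set K : ℝ := Λ ^ 2 / 2 + ((n : ℝ) + (k : ℝ) + 1) ^ 2 with hKdef
  refine ⟨V * (Real.exp Λ + 2 * Real.exp K), by positivity, ?_⟩
  intro X _ _ μ z r hr hr1 hμ
  set f : X → ℝ≥0∞ := fun x => ENNReal.ofReal
      (Real.exp (-(a * dist z x ^ 2 / r ^ 2)) * Real.exp (dist z x ^ 2) *
        dist z x ^ k) with hf
  set B : Set X := Metric.ball z r with hB
  set A : ℕ → Set X := fun j => Metric.ball z (2 ^ (j + 1) * r) \ Metric.ball z (2 ^ j * r)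
    with hA
  have hr2 : (0 : ℝ) < r ^ 2 := by positivity
  have hr2le : r ^ 2 ≤ 1 := by nlinarith
  -- cover
  have hcov : ∀ x : X, x ∈ B ∪ ⋃ j, A j := by
    intro x
    have hex : ∃ nn : ℕ, dist x z < 2 ^ nn * r := by
      obtain ⟨nn, hnn⟩ := pow_unbounded_of_one_lt (dist x z / r) (one_lt_two (α := ℝ))
      exact ⟨nn, by rwa [div_lt_iff₀ hr] at hnn⟩
    rcases hN : Nat.find hex with _ | j
    · left
      have h1 := Nat.find_spec hex
      rw [hN] at h1
      simpa [hB, Metric.mem_ball] using h1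
    · right
      have h1 := Nat.find_spec hex
      rw [hN] at h1
      have h2 : ¬ dist x z < 2 ^ j * r :=
        Nat.find_min hex (by rw [hN]; exact Nat.lt_succ_self j)
      exact Set.mem_iUnion.2 ⟨j, Metric.mem_ball.2 h1, fun hmem => h2 (Metric.mem_ball.1 hmem)⟩
  -- measure comparison
  have hle : μ ≤ μ.restrict B + Measure.sum (fun j => μ.restrict (A j)) := by
    refine Measure.le_iff.2 fun E hE => ?_
    have hsub : E ⊆ (E ∩ B) ∪ ⋃ j, (E ∩ A j) := by
      intro x hx
      rcases hcov x with h | h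
      · exact Or.inl ⟨hx, h⟩
      · obtain ⟨j, hj⟩ := Set.mem_iUnion.1 h
        exact Or.inr (Set.mem_iUnion.2 ⟨j, hx, hj⟩)
    calc μ E ≤ μ ((E ∩ B) ∪ ⋃ j, (E ∩ A j)) := measure_mono hsub
      _ ≤ μ (E ∩ B) + μ (⋃ j, (E ∩ A j)) := measure_union_le _ _
      _ ≤ μ (E ∩ B) + ∑' j, μ (E ∩ A j) := add_le_add le_rfl (measure_iUnion_le _)
      _ = (μ.restrict B + Measure.sum (fun j => μ.restrict (A j))) E := by
          rw [Measure.add_apply, Measure.sum_apply _ hE, Measure.restrict_apply hE]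
          simp_rw [Measure.restrict_apply hE]
  -- pointwise bound on ball
  have hball_pt : ∀ x ∈ B, f x ≤ ENNReal.ofReal (r ^ k) := by
    intro x hx
    rw [hf]
    apply ENNReal.ofReal_le_ofReal
    have hd : dist z x < r := by rw [dist_comm]; exact Metric.mem_ball.1 hx
    have hd0 : (0 : ℝ) ≤ dist z x := dist_nonneg
    have hexp : Real.exp (-(a * dist z x ^ 2 / r ^ 2)) * Real.exp (dist z x ^ 2) ≤ 1 := by
      rw [← Real.exp_add, show (1 : ℝ) = Real.exp 0 from Real.exp_zero.symm]
      apply Real.exp_le_exp.2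
      have hdiv : dist z x ^ 2 ≤ a * dist z x ^ 2 / r ^ 2 := by
        rw [le_div_iff₀ hr2]
        nlinarith [sq_nonneg (dist z x)]
      linarith
    calc Real.exp (-(a * dist z x ^ 2 / r ^ 2)) * Real.exp (dist z x ^ 2) * dist z x ^ k
        ≤ 1 * r ^ k := by
          apply mul_le_mul hexp (pow_le_pow_left₀ hd0 hd.le k) (by positivity) one_pos.le
      _ = r ^ k := one_mul _
  -- pointwise bound on annuli
  have hann_pt : ∀ j : ℕ, ∀ x ∈ A j,
      f x ≤ ENNReal.ofReal (Real.exp (-(a / 2 * 4 ^ j)) * (2 ^ (j + 1) * r) ^ k) := by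
    intro j x hx
    rw [hf]
    apply ENNReal.ofReal_le_ofReal
    have hd0 : (0 : ℝ) ≤ dist z x := dist_nonneg
    have hd2 : dist z x < 2 ^ (j + 1) * r := by rw [dist_comm]; exact Metric.mem_ball.1 hx.1
    have hd1 : 2 ^ j * r ≤ dist z x := by
      rw [dist_comm]; exact le_of_not_gt fun hc => hx.2 (Metric.mem_ball.2 hc)
    have h4 : (4 : ℝ) ^ j = ((2 : ℝ) ^ j) ^ 2 := by
      rw [show (4 : ℝ) = 2 ^ 2 by norm_num, ← pow_mul, ← pow_mul, Nat.mul_comm]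
    have hdsq : 4 ^ j * r ^ 2 ≤ dist z x ^ 2 := by
      nlinarith [mul_self_le_mul_self (show (0 : ℝ) ≤ 2 ^ j * r by positivity) hd1]
    have hexp : Real.exp (-(a * dist z x ^ 2 / r ^ 2)) * Real.exp (dist z x ^ 2)
        ≤ Real.exp (-(a / 2 * 4 ^ j)) := by
      rw [← Real.exp_add]
      apply Real.exp_le_exp.2
      have hdiv : a / 2 * 4 ^ j + dist z x ^ 2 ≤ a * dist z x ^ 2 / r ^ 2 := by
        rw [le_div_iff₀ hr2]
        nlinarith [mul_le_mul_of_nonneg_left hdsq (show (0 : ℝ) ≤ a / 2 by linarith),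
          mul_nonneg (sq_nonneg (dist z x)) (show (0 : ℝ) ≤ 1 - r ^ 2 by linarith),
          mul_nonneg (show (0 : ℝ) ≤ a / 2 - 1 by linarith) (sq_nonneg (dist z x))]
      linarith
    exact mul_le_mul hexp (pow_le_pow_left₀ hd0 hd2.le k) (by positivity) (Real.exp_pos _).le
  -- ball integral
  have hballI : ∫⁻ x, f x ∂(μ.restrict B) ≤ ENNReal.ofReal (V * r ^ (n + k) * Real.exp Λ) := by
    calc ∫⁻ x, f x ∂(μ.restrict B) ≤ ENNReal.ofReal (r ^ k) * μ B :=
          aux_lintegral_restrict_le μ B f _ hball_pt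
      _ ≤ ENNReal.ofReal (r ^ k) * ENNReal.ofReal (V * r ^ n * Real.exp (Λ * r)) := by
          gcongr
          exact hμ r hr
      _ = ENNReal.ofReal (r ^ k * (V * r ^ n * Real.exp (Λ * r))) :=
          (ENNReal.ofReal_mul (by positivity)).symm
      _ ≤ ENNReal.ofReal (V * r ^ (n + k) * Real.exp Λ) := by
          apply ENNReal.ofReal_le_ofReal
          have h1 : Real.exp (Λ * r) ≤ Real.exp Λ := Real.exp_le_exp.2 (by nlinarith)
          calc r ^ k * (V * r ^ n * Real.exp (Λ * r))
              = V * (r ^ n * r ^ k) * Real.exp (Λ * r) := by ring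
            _ ≤ V * (r ^ n * r ^ k) * Real.exp Λ := by
                apply mul_le_mul_of_nonneg_left h1
                have := hV.le
                positivity
            _ = V * r ^ (n + k) * Real.exp Λ := by rw [pow_add]
  -- annulus integrals
  have hann : ∀ j : ℕ, ∫⁻ x, f x ∂(μ.restrict (A j)) ≤
      ENNReal.ofReal (V * r ^ (n + k) * Real.exp K) * (ENNReal.ofReal (Real.exp (-1))) ^ j := by
    intro j
    have hball2 : μ (A j) ≤ ENNReal.ofReal (V * (2 ^ (j + 1) * r) ^ n
        * Real.exp (Λ * (2 ^ (j + 1) * r))) :=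
      (measure_mono Set.diff_subset).trans (hμ _ (by positivity))
    have hreal : (Real.exp (-(a / 2 * 4 ^ j)) * (2 ^ (j + 1) * r) ^ k) *
        (V * (2 ^ (j + 1) * r) ^ n * Real.exp (Λ * (2 ^ (j + 1) * r))) ≤
        (V * r ^ (n + k) * Real.exp K) * Real.exp (-1) ^ j := by
      have hjP : (j : ℝ) + 1 ≤ 2 ^ j := by
        have := Nat.succ_le_of_lt (Nat.lt_two_pow_self (n := j))
        exact_mod_cast this
      have hP1 : (1 : ℝ) ≤ 2 ^ j := by
        have := Nat.cast_nonneg (α := ℝ) j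
        linarith
      have hlog1 : Real.log 2 ≤ 1 := by
        have := Real.log_le_sub_one_of_pos (by norm_num : (0:ℝ) < 2); linarith
      have hlog0 : (0 : ℝ) ≤ Real.log 2 := Real.log_nonneg one_le_two
      have h4 : (4 : ℝ) ^ j = ((2 : ℝ) ^ j) ^ 2 := by
        rw [show (4 : ℝ) = 2 ^ 2 by norm_num, ← pow_mul, ← pow_mul, Nat.mul_comm]
      have hQm : ((2 : ℝ) ^ (j + 1)) ^ (n + k)
          = Real.exp ((((j + 1) * (n + k) : ℕ) : ℝ) * Real.log 2) := by
        rw [← pow_mul, Real.exp_nat_mul, Real.exp_log (by norm_num : (0:ℝ) < 2)]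
      have hEj : Real.exp (-1) ^ j = Real.exp ((j : ℝ) * (-1)) := by
        rw [Real.exp_nat_mul]
      have hkey : ((2 : ℝ) ^ (j + 1)) ^ (n + k) * Real.exp (-(a / 2 * 4 ^ j))
          * Real.exp (Λ * 2 ^ (j + 1)) ≤ Real.exp K * Real.exp (-1) ^ j := by
        rw [hQm, hEj, ← Real.exp_add, ← Real.exp_add, ← Real.exp_add]
        apply Real.exp_le_exp.2
        push_cast
        rw [hKdef]
        have hps : (2 : ℝ) ^ (j + 1) = 2 ^ j * 2 := pow_succ 2 j
        rw [hps, h4]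
        linarith [aux_scalar a Λ ((2:ℝ) ^ j) ((n:ℝ) + (k:ℝ)) (j:ℝ) (Real.log 2) ha hjP hP1
          (by positivity) (by positivity) hlog0 hlog1]
      have hmono : Real.exp (Λ * (2 ^ (j + 1) * r)) ≤ Real.exp (Λ * 2 ^ (j + 1)) := by
        apply Real.exp_le_exp.2
        have h2p : (0 : ℝ) < 2 ^ (j + 1) := by positivity
        nlinarith [mul_nonneg (mul_nonneg hΛ.le h2p.le) (show (0:ℝ) ≤ 1 - r by linarith)]
      calc (Real.exp (-(a / 2 * 4 ^ j)) * (2 ^ (j + 1) * r) ^ k) *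
            (V * (2 ^ (j + 1) * r) ^ n * Real.exp (Λ * (2 ^ (j + 1) * r)))
          = V * r ^ (n + k) * (((2 : ℝ) ^ (j + 1)) ^ (n + k)
              * Real.exp (-(a / 2 * 4 ^ j)) * Real.exp (Λ * (2 ^ (j + 1) * r))) := by
            rw [mul_pow, mul_pow, pow_add, pow_add]; ring
        _ ≤ V * r ^ (n + k) * (((2 : ℝ) ^ (j + 1)) ^ (n + k)
              * Real.exp (-(a / 2 * 4 ^ j)) * Real.exp (Λ * 2 ^ (j + 1))) := by
            apply mul_le_mul_of_nonneg_left _ (by positivity)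
            apply mul_le_mul_of_nonneg_left hmono (by positivity)
        _ ≤ V * r ^ (n + k) * (Real.exp K * Real.exp (-1) ^ j) := by
            apply mul_le_mul_of_nonneg_left hkey (by positivity)
        _ = (V * r ^ (n + k) * Real.exp K) * Real.exp (-1) ^ j := by ring
    calc ∫⁻ x, f x ∂(μ.restrict (A j))
        ≤ ENNReal.ofReal (Real.exp (-(a / 2 * 4 ^ j)) * (2 ^ (j + 1) * r) ^ k) * μ (A j) :=
          aux_lintegral_restrict_le μ _ f _ (hann_pt j)
      _ ≤ ENNReal.ofReal (Real.exp (-(a / 2 * 4 ^ j)) * (2 ^ (j + 1) * r) ^ k) *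
            ENNReal.ofReal (V * (2 ^ (j + 1) * r) ^ n * Real.exp (Λ * (2 ^ (j + 1) * r))) := by
          gcongr
      _ = ENNReal.ofReal ((Real.exp (-(a / 2 * 4 ^ j)) * (2 ^ (j + 1) * r) ^ k) *
            (V * (2 ^ (j + 1) * r) ^ n * Real.exp (Λ * (2 ^ (j + 1) * r)))) :=
          (ENNReal.ofReal_mul (by positivity)).symm
      _ ≤ ENNReal.ofReal ((V * r ^ (n + k) * Real.exp K) * Real.exp (-1) ^ j) :=
          ENNReal.ofReal_le_ofReal hreal
      _ = ENNReal.ofReal (V * r ^ (n + k) * Real.exp K) * (ENNReal.ofReal (Real.exp (-1))) ^ j := by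
          rw [ENNReal.ofReal_mul (by positivity), ENNReal.ofReal_pow (Real.exp_pos _).le]
  -- geometric series
  have hq : ENNReal.ofReal (Real.exp (-1)) ≤ 2⁻¹ := by
    rw [show ((2 : ℝ≥0∞))⁻¹ = ENNReal.ofReal 2⁻¹ by
      rw [ENNReal.ofReal_inv_of_pos (by norm_num : (0:ℝ) < 2)]; norm_num]
    apply ENNReal.ofReal_le_ofReal
    rw [Real.exp_neg]
    have h2e : (2 : ℝ) ≤ Real.exp 1 := by have := Real.add_one_le_exp 1; linarith
    exact inv_anti₀ two_pos h2e
  have hgeom : ∑' j : ℕ, (ENNReal.ofReal (Real.exp (-1))) ^ j ≤ 2 := by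
    calc ∑' j : ℕ, (ENNReal.ofReal (Real.exp (-1))) ^ j
        ≤ ∑' j : ℕ, ((2 : ℝ≥0∞)⁻¹) ^ j := ENNReal.tsum_le_tsum fun j => by gcongr
      _ = (1 - 2⁻¹)⁻¹ := ENNReal.tsum_geometric _
      _ = 2 := by rw [ENNReal.one_sub_inv_two, inv_inv]
  -- assembly
  calc ∫⁻ x, f x ∂μ
      ≤ ∫⁻ x, f x ∂(μ.restrict B + Measure.sum fun j => μ.restrict (A j)) :=
        lintegral_mono' hle le_rfl
    _ = ∫⁻ x, f x ∂(μ.restrict B) + ∑' j, ∫⁻ x, f x ∂(μ.restrict (A j)) := by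
        rw [lintegral_add_measure, lintegral_sum_measure]
    _ ≤ ENNReal.ofReal (V * r ^ (n + k) * Real.exp Λ) +
          ∑' j : ℕ, ENNReal.ofReal (V * r ^ (n + k) * Real.exp K) *
            (ENNReal.ofReal (Real.exp (-1))) ^ j :=
        add_le_add hballI (ENNReal.tsum_le_tsum hann)
    _ = ENNReal.ofReal (V * r ^ (n + k) * Real.exp Λ) +
          ENNReal.ofReal (V * r ^ (n + k) * Real.exp K) *
            ∑' j : ℕ, (ENNReal.ofReal (Real.exp (-1))) ^ j := by
        rw [ENNReal.tsum_mul_left]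
    _ ≤ ENNReal.ofReal (V * r ^ (n + k) * Real.exp Λ) +
          ENNReal.ofReal (V * r ^ (n + k) * Real.exp K) * 2 := by gcongr
    _ = ENNReal.ofReal (V * (Real.exp Λ + 2 * Real.exp K) * r ^ (n + k)) := by
        rw [show (2 : ℝ≥0∞) = ENNReal.ofReal 2 by norm_num,
          ← ENNReal.ofReal_mul (by positivity),
          ← ENNReal.ofReal_add (by positivity) (by positivity)]
        congr 1
        ring
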